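/- If a dictionary D has spark σ(D) (the smallest number of linearly dependent columns), and a vector γ satisfies x = Dγ with ‖γ‖₀ < σ(D)/2, then γ is the unique sparsest representation of x: any γ' with Dγ' = x and γ' ≠ γ satisfies ‖γ'‖₀ > ‖γ‖₀. -/
import Mathlib


/-- The spark of a matrix: the smallest number of linearly dependent columns. -/
noncomputable def spark {n m : ℕ} (D : Matrix (Fin n) (Fin m) ℝ) : ℕ :=
  sInf {k | ∃ s : Finset (Fin m), s.card = k ∧
    ¬ LinearIndependent ℝ (fun j : {x // x ∈ s} => fun i => D i j.1)}

/-- The ℓ₀ "norm": number of nonzero entries. -/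
noncomputable def l0 {m : ℕ} (γ : Fin m → ℝ) : ℕ := {i | γ i ≠ 0}.ncard

lemma l0_eq_card {m : ℕ} (γ : Fin m → ℝ) :
    l0 γ = (Finset.univ.filter fun i => γ i ≠ 0).card := by
  rw [l0, Set.ncard_eq_toFinset_card']
  congr 1
  ext i
  simp

/-- If x = Dγ with ‖γ‖₀ < spark(D)/2, then γ is the unique sparsest
representation of x. -/
theorem stmt0 {n m : ℕ} (D : Matrix (Fin n) (Fin m) ℝ) (γ : Fin m → ℝ)
    (hγ : 2 * l0 γ < spark D) :
    ∀ γ' : Fin m → ℝ, D.mulVec γ' = D.mulVec γ → γ' ≠ γ → l0 γ < l0 γ' := by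
  intro γ' heq hne
  by_contra hle
  push_neg at hle
  set δ : Fin m → ℝ := γ' - γ with hδdef
  have hδ0 : δ ≠ 0 := sub_ne_zero.mpr hne
  have hDδ : D.mulVec δ = 0 := by
    simp [hδdef, Matrix.mulVec_sub, heq]
  set s : Finset (Fin m) := Finset.univ.filter (fun j => δ j ≠ 0) with hs
  have hdep : ¬ LinearIndependent ℝ (fun j : {x // x ∈ s} => fun i => D i j.1) := by
    rw [Fintype.linearIndependent_iff]
    push_neg
    refine ⟨fun j => δ j.1, ?_, ?_⟩
    · funext i
      have h := congrFun hDδ i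
      simp only [Matrix.mulVec, dotProduct, Pi.zero_apply] at h
      simp only [Finset.sum_apply, Pi.smul_apply, smul_eq_mul, Pi.zero_apply]
      rw [Finset.sum_coe_sort s (fun j => δ j * D i j)]
      rw [Finset.sum_filter_of_ne (by intro j _ hj hδj; simp [hδj] at hj)]
      calc ∑ j, δ j * D i j = ∑ j, D i j * δ j := by simp [mul_comm]
        _ = 0 := h
    · obtain ⟨j, hj⟩ := Function.ne_iff.mp hδ0
      have hj' : δ j ≠ 0 := by simpa using hj
      exact ⟨⟨j, by simp [hs, hj']⟩, hj'⟩
  have hspark : spark D ≤ s.card := Nat.sInf_le ⟨s, rfl, hdep⟩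
  have hsub : s ⊆ (Finset.univ.filter fun i => γ' i ≠ 0) ∪
      (Finset.univ.filter fun i => γ i ≠ 0) := by
    intro j hj
    simp only [hs, Finset.mem_filter, Finset.mem_union, Finset.mem_univ, true_and,
      hδdef, Pi.sub_apply] at hj ⊢
    by_contra hc
    push_neg at hc
    simp [hc.1, hc.2] at hj
  have hcard : s.card ≤ l0 γ' + l0 γ := by
    rw [l0_eq_card, l0_eq_card]
    exact le_trans (Finset.card_le_card hsub) (Finset.card_union_le _ _)
  omega
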